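/- For every k ≥ 2 and every sufficiently large t, the graph M_{t,k} satisfies dim_k(M_{t,k}) = kt. -/

import Mathlib

open SimpleGraph Function
open scoped Classical

/-- A set `S` is a resolving set of `G`: every pair of distinct vertices differ in
distance to some element of `S`. -/
def IsResolving {V : Type*} (G : SimpleGraph V) (S : Set V) : Prop :=
  ∀ x y : V, x ≠ y → ∃ s ∈ S, G.dist s x ≠ G.dist s y

/-- A fault-tolerant resolving set: removing any single vertex leaves a resolving set. -/
def IsFTResolving {V : Type*} (G : SimpleGraph V) (S : Set V) : Prop :=
  ∀ s ∈ S, IsResolving G (S \ {s})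

/-- The metric dimension of `G`. -/
noncomputable def metricDim {V : Type*} [Fintype V] (G : SimpleGraph V) : ℕ :=
  sInf {n | ∃ S : Finset V, IsResolving G ↑S ∧ S.card = n}

/-- The fault-tolerant metric dimension of `G`. -/
noncomputable def ftDim {V : Type*} [Fintype V] (G : SimpleGraph V) : ℕ :=
  sInf {n | ∃ S : Finset V, IsFTResolving G ↑S ∧ S.card = n}

/-- `S` is a `k`-resolving set: every pair of distinct vertices is distinguished
by at least `k` vertices of `S`. -/
def IsKResolving {V : Type*} [Fintype V] (G : SimpleGraph V) (k : ℕ) (S : Finset V) : Prop :=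
  ∀ x y : V, x ≠ y → k ≤ (S.filter (fun s => G.dist s x ≠ G.dist s y)).card

/-- The `k`-metric dimension of `G`. -/
noncomputable def kMetricDim {V : Type*} [Fintype V] (G : SimpleGraph V) (k : ℕ) : ℕ :=
  sInf {n | ∃ S : Finset V, IsKResolving G k S ∧ S.card = n}

/-- The graph `M_{t,k}`: a clique on all binary strings of length `t`, together with the
vertices `v_{i,j}` of `K_t □ K_k` (adjacent iff they agree in exactly one coordinate),
where `v_{i,j}` is adjacent to exactly those strings having `1` at coordinate `i`. -/
def Mtk (t k : ℕ) : SimpleGraph ((Fin t → Bool) ⊕ (Fin t × Fin k)) where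
  Adj x y :=
    match x, y with
    | Sum.inl u, Sum.inl v => u ≠ v
    | Sum.inl u, Sum.inr p => u p.1 = true
    | Sum.inr p, Sum.inl u => u p.1 = true
    | Sum.inr p, Sum.inr q => (p.1 = q.1 ∧ p.2 ≠ q.2) ∨ (p.1 ≠ q.1 ∧ p.2 = q.2)
  symm := by
    constructor
    rintro (u | p) (v | q) h
    · exact h.symm
    · exact h
    · exact h
    · rcases h with ⟨h1, h2⟩ | ⟨h1, h2⟩
      · exact Or.inl ⟨h1.symm, h2.symm⟩
      · exact Or.inr ⟨h1.symm, h2.symm⟩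
  loopless := by
    constructor
    rintro (u | p) h
    · exact h rfl
    · rcases h with ⟨_, h2⟩ | ⟨h1, _⟩
      · exact h2 rfl
      · exact h1 rfl

variable {t k : ℕ}

lemma adj_inl_inl {u v : Fin t → Bool} : (Mtk t k).Adj (Sum.inl u) (Sum.inl v) ↔ u ≠ v := Iff.rfl
lemma adj_inl_inr {u : Fin t → Bool} {p : Fin t × Fin k} :
    (Mtk t k).Adj (Sum.inl u) (Sum.inr p) ↔ u p.1 = true := Iff.rfl
lemma adj_inr_inr {p q : Fin t × Fin k} :
    (Mtk t k).Adj (Sum.inr p) (Sum.inr q) ↔ (p.1 = q.1 ∧ p.2 ≠ q.2) ∨ (p.1 ≠ q.1 ∧ p.2 = q.2) := Iff.rfl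

lemma mtk_dist_eq_two {x y z : (Fin t → Bool) ⊕ (Fin t × Fin k)} (hxy : x ≠ y)
    (hn : ¬ (Mtk t k).Adj x y) (h1 : (Mtk t k).Adj x z) (h2 : (Mtk t k).Adj z y) :
    (Mtk t k).dist x y = 2 := by
  have hle := SimpleGraph.dist_le (SimpleGraph.Walk.cons h1 (SimpleGraph.Walk.cons h2 SimpleGraph.Walk.nil))
  simp only [SimpleGraph.Walk.length_cons, SimpleGraph.Walk.length_nil] at hle
  have h0 : (Mtk t k).dist x y ≠ 0 := by
    intro h
    rcases SimpleGraph.dist_eq_zero_iff_eq_or_not_reachable.mp h with h' | h'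
    · exact hxy h'
    · exact h' ⟨SimpleGraph.Walk.cons h1 (SimpleGraph.Walk.cons h2 SimpleGraph.Walk.nil)⟩
  have h1' : (Mtk t k).dist x y ≠ 1 := fun h => hn (SimpleGraph.dist_eq_one_iff_adj.mp h)
  omega

lemma dist_inl_inl {u v : Fin t → Bool} (h : u ≠ v) :
    (Mtk t k).dist (Sum.inl u) (Sum.inl v) = 1 :=
  SimpleGraph.dist_eq_one_iff_adj.mpr h

lemma dist_inl_inr {u : Fin t → Bool} {p : Fin t × Fin k} :
    (Mtk t k).dist (Sum.inl u) (Sum.inr p) = if u p.1 = true then 1 else 2 := by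
  by_cases h : u p.1 = true
  · rw [if_pos h]; exact SimpleGraph.dist_eq_one_iff_adj.mpr h
  · rw [if_neg h]
    have hu : u p.1 = false := by simpa using h
    apply mtk_dist_eq_two (z := Sum.inl (fun _ => true)) (by simp) (show ¬(Mtk t k).Adj (Sum.inl u) (Sum.inr p) from h)
    · rw [adj_inl_inl]; intro heq
      have := congrFun heq p.1; rw [hu] at this; simp at this
    · rfl

lemma dist_inr_inl {u : Fin t → Bool} {p : Fin t × Fin k} :
    (Mtk t k).dist (Sum.inr p) (Sum.inl u) = if u p.1 = true then 1 else 2 := by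
  rw [SimpleGraph.dist_comm]; exact dist_inl_inr

lemma dist_inr_inr {p q : Fin t × Fin k} :
    (Mtk t k).dist (Sum.inr p) (Sum.inr q) =
      if p = q then 0 else if p.1 = q.1 ∨ p.2 = q.2 then 1 else 2 := by
  by_cases hpq : p = q
  · subst hpq; simp
  · rw [if_neg hpq]
    by_cases h1 : p.1 = q.1
    · have h2 : p.2 ≠ q.2 := fun h => hpq (Prod.ext h1 h)
      rw [if_pos (Or.inl h1)]
      exact SimpleGraph.dist_eq_one_iff_adj.mpr (Or.inl ⟨h1, h2⟩)
    · by_cases h2 : p.2 = q.2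
      · rw [if_pos (Or.inr h2)]
        exact SimpleGraph.dist_eq_one_iff_adj.mpr (Or.inr ⟨h1, h2⟩)
      · rw [if_neg (by tauto)]
        apply mtk_dist_eq_two (z := Sum.inr (p.1, q.2)) (by simpa using hpq)
        · rw [adj_inr_inr]; tauto
        · exact Or.inl ⟨rfl, h2⟩
        · exact Or.inr ⟨h1, rfl⟩

/-- helper: injection from a fintype into a finset gives card bound -/
lemma le_card_of_inj {α W : Type*} [Fintype α] {T : Finset W} (f : α → W)
    (hmem : ∀ a, f a ∈ T) (hinj : Function.Injective f) : Fintype.card α ≤ T.card := by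
  classical
  rw [← Finset.card_univ]
  exact Finset.card_le_card_of_injOn f (fun a _ => hmem a) hinj.injOn

/-- the candidate set: all of V₂ -/
noncomputable def S2 (t k : ℕ) : Finset ((Fin t → Bool) ⊕ (Fin t × Fin k)) :=
  Finset.univ.map ⟨Sum.inr, Sum.inr_injective⟩

lemma mem_S2 (p : Fin t × Fin k) : Sum.inr p ∈ S2 t k := by simp [S2]

lemma card_S2 : (S2 t k).card = k * t := by
  simp [S2, mul_comm]

lemma aux_inl_inr (hk : 2 ≤ k) (hkt : k ≤ t) (u : Fin t → Bool) (p : Fin t × Fin k) :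
    k ≤ ((S2 t k).filter fun s =>
      (Mtk t k).dist s (Sum.inl u) ≠ (Mtk t k).dist s (Sum.inr p)).card := by
  have : Nontrivial (Fin k) := Fin.nontrivial_iff_two_le.mpr hk
  obtain ⟨b', hb'⟩ := exists_ne p.2
  refine le_trans (show k ≤ Fintype.card (Fin t) by simpa using hkt)
    (le_card_of_inj (fun a : Fin t => (Sum.inr (a, if u a = true ∧ a ≠ p.1 then b' else p.2) :
      (Fin t → Bool) ⊕ (Fin t × Fin k))) ?_ ?_)
  · intro a
    rw [Finset.mem_filter]
    refine ⟨mem_S2 _, ?_⟩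
    rw [dist_inr_inl, dist_inr_inr]
    by_cases hap : a = p.1
    · subst hap
      have hc : (p.1, if u p.1 = true ∧ p.1 ≠ p.1 then b' else p.2) = p := by simp
      rw [hc, if_pos rfl]
      split <;> omega
    · by_cases hua : u a = true
      · have hc : (if u a = true ∧ a ≠ p.1 then b' else p.2) = b' := if_pos ⟨hua, hap⟩
        rw [hc, if_pos hua, if_neg (by simp [Prod.ext_iff, hap]),
          if_neg (by simp [hap, hb'])]
        omega
      · have hc : (if u a = true ∧ a ≠ p.1 then b' else p.2) = p.2 := if_neg (by tauto)
        rw [hc, if_neg hua, if_neg (by simp [Prod.ext_iff, hap]), if_pos (Or.inr rfl)]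
        omega
  · intro a1 a2 h
    simpa using congrArg (fun s => match s with | Sum.inr q => q.1 | Sum.inl _ => a1) h

lemma mtk_upper (hk : 2 ≤ k) (hkt : k ≤ t) : IsKResolving (Mtk t k) k (S2 t k) := by
  classical
  intro x y hxy
  match x, y with
  | Sum.inl u, Sum.inl v =>
    obtain ⟨i, hi⟩ := Function.ne_iff.mp (show u ≠ v by simpa using hxy)
    refine le_trans (show k ≤ Fintype.card (Fin k) by simp)
      (le_card_of_inj (fun j : Fin k => (Sum.inr (i, j) : (Fin t → Bool) ⊕ (Fin t × Fin k))) ?_ ?_)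
    · intro j
      rw [Finset.mem_filter]
      refine ⟨mem_S2 _, ?_⟩
      rw [dist_inr_inl, dist_inr_inl]
      cases hu : u i <;> cases hv : v i <;> simp_all
    · intro j1 j2 h; simpa using h
  | Sum.inl u, Sum.inr p => exact aux_inl_inr hk hkt u p
  | Sum.inr p, Sum.inl u =>
    have := aux_inl_inr hk hkt u p
    rwa [Finset.filter_congr (fun s _ => by rw [ne_comm])]
  | Sum.inr p, Sum.inr q =>
    have hpq : p ≠ q := by simpa using hxy
    by_cases h1 : p.1 = q.1
    · have h2 : p.2 ≠ q.2 := fun h => hpq (Prod.ext h1 h)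
      refine le_trans (show k ≤ Fintype.card (Fin t) by simpa using hkt)
        (le_card_of_inj (fun a : Fin t => (Sum.inr (a, p.2) : (Fin t → Bool) ⊕ (Fin t × Fin k))) ?_ ?_)
      · intro a
        rw [Finset.mem_filter]
        refine ⟨mem_S2 _, ?_⟩
        rw [dist_inr_inr, dist_inr_inr]
        by_cases hap : a = p.1
        · subst hap
          rw [if_pos (by simp), if_neg (fun h => h2 (congrArg Prod.snd h))]
          split <;> omega
        · rw [if_neg (by simp [Prod.ext_iff, hap]), if_pos (Or.inr rfl),
            if_neg (by simp [Prod.ext_iff]; exact fun _ => h2),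
            if_neg (by rw [← h1]; exact not_or.mpr ⟨hap, h2⟩)]
          omega
      · intro a1 a2 h; simpa using congrArg (fun s => match s with | Sum.inr r => r.1 | Sum.inl _ => a1) h
    · refine le_trans (show k ≤ Fintype.card (Fin k) by simp)
        (le_card_of_inj (fun b : Fin k => (Sum.inr (if b = q.2 ∧ p.2 ≠ q.2 then q.1 else p.1, b) :
          (Fin t → Bool) ⊕ (Fin t × Fin k))) ?_ ?_)
      · intro b
        rw [Finset.mem_filter]
        refine ⟨mem_S2 _, ?_⟩
        rw [dist_inr_inr, dist_inr_inr]
        by_cases h2 : p.2 = q.2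
        · have hr : (if b = q.2 ∧ p.2 ≠ q.2 then q.1 else p.1) = p.1 := if_neg (by tauto)
          rw [hr]
          by_cases hbp : b = p.2
          · have hbq : b = q.2 := hbp.trans h2
            rw [if_pos (by simp [Prod.ext_iff, hbp]), if_neg (by simp [Prod.ext_iff, h1]),
              if_pos (Or.inr hbq)]
            omega
          · have hbq : ¬ b = q.2 := by rw [← h2]; exact hbp
            rw [if_neg (by simp [Prod.ext_iff, hbp]), if_pos (Or.inl rfl),
              if_neg (by simp [Prod.ext_iff, h1]), if_neg (not_or.mpr ⟨h1, hbq⟩)]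
            omega
        · by_cases hbq : b = q.2
          · have hr : (if b = q.2 ∧ p.2 ≠ q.2 then q.1 else p.1) = q.1 := if_pos ⟨hbq, h2⟩
            rw [hr, if_neg (by simp [Prod.ext_iff]; intro hh; exact absurd hh.symm h1),
              if_neg (not_or.mpr ⟨fun hh => h1 hh.symm, fun hh : b = p.2 => h2 (hh ▸ hbq)⟩),
              if_pos (by simp [Prod.ext_iff, hbq])]
            omega
          · have hr : (if b = q.2 ∧ p.2 ≠ q.2 then q.1 else p.1) = p.1 := if_neg (by tauto)
            rw [hr]
            by_cases hbp : b = p.2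
            · rw [if_pos (by simp [Prod.ext_iff, hbp]), if_neg (by simp [Prod.ext_iff, h1]),
                if_neg (not_or.mpr ⟨h1, hbq⟩)]
              omega
            · rw [if_neg (by simp [Prod.ext_iff, hbp]), if_pos (Or.inl rfl),
                if_neg (by simp [Prod.ext_iff, h1]), if_neg (not_or.mpr ⟨h1, hbq⟩)]
              omega
      · intro b1 b2 h; simpa using congrArg (fun s => match s with | Sum.inr r => r.2 | Sum.inl _ => b1) h

lemma card_false_half (ht1 : 1 ≤ t) (i : Fin t) :
    (Finset.univ.filter (fun u : Fin t → Bool => u i = false)).card = 2 ^ (t - 1) := by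
  classical
  have htot := Finset.card_filter_add_card_filter_not
    (s := (Finset.univ : Finset (Fin t → Bool))) (p := fun u => u i = false)
  have hcard : (Finset.univ : Finset (Fin t → Bool)).card = 2 ^ t := by
    simp [Fintype.card_fun]
  have heq : (Finset.univ.filter (fun u : Fin t → Bool => u i = false)).card
      = (Finset.univ.filter (fun u : Fin t → Bool => ¬ u i = false)).card := by
    refine Finset.card_nbij' (fun u => Function.update u i true)
      (fun u => Function.update u i false) ?_ ?_ ?_ ?_
    · intro u hu; simp
    · intro u hu; simp
    · intro u hu
      simp only [Finset.coe_filter, Finset.mem_coe, Finset.mem_filter, Finset.mem_univ,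
        true_and, Set.mem_setOf_eq] at hu
      show Function.update (Function.update u i true) i false = u
      rw [Function.update_idem]
      funext a
      by_cases ha : a = i
      · subst ha; rw [Function.update_self, hu]
      · rw [Function.update_of_ne ha]
    · intro u hu
      simp only [Finset.coe_filter, Finset.mem_coe, Finset.mem_filter, Finset.mem_univ,
        true_and, Set.mem_setOf_eq] at hu
      have hu' : u i = true := by simpa using hu
      show Function.update (Function.update u i false) i true = u
      rw [Function.update_idem]
      funext a
      by_cases ha : a = i
      · subst ha; rw [Function.update_self, hu']
      · rw [Function.update_of_ne ha]
  have hpow : 2 ^ t = 2 * 2 ^ (t - 1) := by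
    clear htot heq
    obtain ⟨n, rfl⟩ : ∃ n, t = n + 1 := ⟨t - 1, by omega⟩
    rw [Nat.add_sub_cancel, pow_succ]
    ring
  rw [hcard] at htot
  rw [heq] at htot ⊢
  revert htot
  generalize (Finset.univ.filter (fun u : Fin t → Bool => ¬ u i = false)).card = X
  intro htot
  clear heq hcard
  omega

lemma mtk_lower (ht1 : 1 ≤ t) (ht2 : k * t ≤ 2 ^ (t - 1))
    (S : Finset ((Fin t → Bool) ⊕ (Fin t × Fin k)))
    (hS : IsKResolving (Mtk t k) k S) : k * t ≤ S.card := by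
  classical
  by_cases hrows : ∀ i : Fin t, k ≤ (S.filter (fun s => ∃ j, s = Sum.inr (i, j))).card
  · calc k * t = ∑ _i : Fin t, k := by simp [mul_comm]
      _ ≤ ∑ i : Fin t, (S.filter (fun s => ∃ j, s = Sum.inr (i, j))).card :=
          Finset.sum_le_sum (fun i _ => hrows i)
      _ = (Finset.univ.biUnion
            (fun i : Fin t => S.filter (fun s => ∃ j, s = Sum.inr (i, j)))).card := by
          rw [Finset.card_biUnion]
          intro i1 _ i2 _ hne
          rw [Function.onFun, Finset.disjoint_left]
          intro s h1 h2
          rw [Finset.mem_filter] at h1 h2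
          obtain ⟨_, j1, rfl⟩ := h1
          obtain ⟨_, j2, heq⟩ := h2
          apply hne
          simpa using congrArg (fun x => match x with | Sum.inr r => r.1 | Sum.inl _ => i1) heq
      _ ≤ S.card := Finset.card_le_card (fun s hs => by
          rw [Finset.mem_biUnion] at hs
          obtain ⟨i, _, hi⟩ := hs
          exact (Finset.mem_filter.mp hi).1)
  · push_neg at hrows
    obtain ⟨i, hi⟩ := hrows
    have key : ∀ u : Fin t → Bool, u i = false →
        ∃ s ∈ S, s = Sum.inl u ∨ s = Sum.inl (Function.update u i true) := by
      intro u hu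
      set u' := Function.update u i true with hu'def
      have hne : (Sum.inl u : (Fin t → Bool) ⊕ (Fin t × Fin k)) ≠ Sum.inl u' := by
        intro h
        have h2 : u = u' := by simpa using h
        have h3 : u i = u' i := congrFun h2 i
        rw [hu, hu'def, Function.update_self] at h3
        exact absurd h3 (by simp)
      have hfil := hS _ _ hne
      have hsub : S.filter
            (fun s => (Mtk t k).dist s (Sum.inl u) ≠ (Mtk t k).dist s (Sum.inl u'))
          ⊆ (S.filter (fun s => s = Sum.inl u ∨ s = Sum.inl u'))
            ∪ (S.filter (fun s => ∃ j, s = Sum.inr (i, j))) := by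
        intro s hs
        rw [Finset.mem_filter] at hs
        obtain ⟨hsS, hd⟩ := hs
        rw [Finset.mem_union, Finset.mem_filter, Finset.mem_filter]
        match s with
        | Sum.inl v =>
          left; refine ⟨hsS, ?_⟩
          by_contra hcon
          push_neg at hcon
          obtain ⟨hv1, hv2⟩ := hcon
          have hv1' : v ≠ u := fun h => hv1 (congrArg Sum.inl h)
          have hv2' : v ≠ u' := fun h => hv2 (congrArg Sum.inl h)
          exact hd (by rw [dist_inl_inl hv1', dist_inl_inl hv2'])
        | Sum.inr p =>
          right; refine ⟨hsS, ?_⟩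
          by_cases hpi : p.1 = i
          · exact ⟨p.2, by rw [← hpi]⟩
          · exfalso
            apply hd
            rw [dist_inr_inl, dist_inr_inl]
            have hup : u' p.1 = u p.1 := Function.update_of_ne hpi _ _
            rw [hup]
      have hcard := (hfil.trans (Finset.card_le_card hsub)).trans (Finset.card_union_le _ _)
      have hpos : 0 < (S.filter (fun s => s = Sum.inl u ∨ s = Sum.inl u')).card := by
        by_contra h
        push_neg at h
        have h0 : (S.filter (fun s => s = Sum.inl u ∨ s = Sum.inl u')).card = 0 :=
          Nat.le_zero.mp h
        rw [h0, zero_add] at hcard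
        exact absurd hcard (not_le.mpr hi)
      obtain ⟨s, hs⟩ := Finset.card_pos.mp hpos
      rw [Finset.mem_filter] at hs
      exact ⟨s, hs.1, hs.2⟩
    have hinj : (Finset.univ.filter (fun u : Fin t → Bool => u i = false)).card ≤ S.card := by
      apply Finset.card_le_card_of_injOn
        (fun u => if h : ∃ s ∈ S, s = Sum.inl u ∨ s = Sum.inl (Function.update u i true)
          then h.choose else Sum.inl u)
      · intro u hu
        rw [Finset.mem_coe, Finset.mem_filter] at hu
        simp only [Finset.mem_coe]
        rw [dif_pos (key u hu.2)]
        exact (key u hu.2).choose_spec.1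
      · intro u1 h1 u2 h2 heq
        simp only [Finset.coe_filter, Set.mem_setOf_eq, Finset.mem_univ, true_and] at h1 h2
        simp only [dif_pos (key u1 h1), dif_pos (key u2 h2)] at heq
        have s1 := (key u1 h1).choose_spec.2
        have s2 := (key u2 h2).choose_spec.2
        rw [heq] at s1
        rcases s1 with e1 | e1 <;> rcases s2 with e2 | e2
        · exact Sum.inl_injective (e1.symm.trans e2)
        · exfalso
          have he := Sum.inl_injective (e2.symm.trans e1)
          have hc := congrFun he i
          rw [h1, Function.update_self] at hc
          exact absurd hc.symm (by simp)
        · exfalso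
          have he := Sum.inl_injective (e1.symm.trans e2)
          have hc := congrFun he i
          rw [h2, Function.update_self] at hc
          exact absurd hc.symm (by simp)
        · have he := Sum.inl_injective (e2.symm.trans e1)
          funext a
          by_cases ha : a = i
          · subst ha; rw [h1, h2]
          · have hc := congrFun he a
            rw [Function.update_of_ne ha, Function.update_of_ne ha] at hc
            exact hc.symm
    calc k * t ≤ 2 ^ (t - 1) := ht2
      _ = (Finset.univ.filter (fun u : Fin t → Bool => u i = false)).card :=
          (card_false_half ht1 i).symm
      _ ≤ S.card := hinj

theorem stmt18 (t k : ℕ) (hk : 2 ≤ k) (ht : k + 3 < t) (ht2 : k * t ≤ 2 ^ (t - 1)) :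
    kMetricDim (Mtk t k) k = k * t := by
  have hkt : k ≤ t := by omega
  have ht1 : 1 ≤ t := by omega
  apply le_antisymm
  · exact Nat.sInf_le ⟨S2 t k, mtk_upper hk hkt, card_S2⟩
  · refine le_csInf ⟨k * t, S2 t k, mtk_upper hk hkt, card_S2⟩ ?_
    rintro n ⟨T, hT, rfl⟩
    exact mtk_lower ht1 ht2 T hT
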